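/- Remark 5.3(ii). Assume Θ is a compact topological space (with its Borel σ-algebra) carrying a finite measure ϑ, that (θ,y) ↦ w θ y is continuous, and that Λ > 0. Suppose there exist y* ∈ Y, a measurable ψ : ℝ → ℝ with 0 ≤ ψ and ∫ t in Set.Ioi (0:ℝ), ψ t * Real.exp (-(Λ*t)) dt < ∞ such that ‖S j t y* − y*‖ ≤ ψ t for every t ≥ 0 and every j ∈ I, and suppose there exists L_w > 0 such that for every θ ∈ Θ the map w θ is Lipschitz with constant L_w. Then for every i ∈ I there exists M < ∞ such that for every y ∈ Y, ∫ θ ∂ϑ, ∫ t in Set.Ioi (0:ℝ), Real.exp (-(Λ*t)) * ‖w θ (S i t y*) − y*‖ * p θ (S i t y) dt ≤ M. -/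

import Mathlib

open MeasureTheory ENNReal Filter

/-- **Remark 5.3(ii).** If `Θ` is compact, the semiflows do not move `y*` faster than an
integrable bound `ψ`, and all the maps `w θ` are Lipschitz with one common constant, then
condition (3) of Theorem 5.1 holds: the relevant double integrals are bounded uniformly
in `y`. -/
theorem rem_5_3_ii
    {d N : ℕ} (hd : 0 < d) (hN : 0 < N)
    {Θ : Type*} [TopologicalSpace Θ] [CompactSpace Θ] [MeasurableSpace Θ] [BorelSpace Θ]
    (ϑ : Measure Θ) [IsFiniteMeasure ϑ]
    (Λ : ℝ) (hΛ : 0 < Λ)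
    (S : Fin N → ℝ → EuclideanSpace ℝ (Fin d) → EuclideanSpace ℝ (Fin d))
    (hS_meas : ∀ i, Measurable (fun q : ℝ × EuclideanSpace ℝ (Fin d) => S i q.1 q.2))
    (w : Θ → EuclideanSpace ℝ (Fin d) → EuclideanSpace ℝ (Fin d))
    (hw_cont : Continuous (fun q : Θ × EuclideanSpace ℝ (Fin d) => w q.1 q.2))
    (p : Θ → EuclideanSpace ℝ (Fin d) → ℝ)
    (hp_meas : Measurable (fun q : Θ × EuclideanSpace ℝ (Fin d) => p q.1 q.2))
    (hp_nonneg : ∀ θ y, 0 ≤ p θ y)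
    (hp_int : ∀ y, ∫ θ, p θ y ∂ϑ = 1)
    (ystar : EuclideanSpace ℝ (Fin d))
    (ψ : ℝ → ℝ) (hψ_meas : Measurable ψ) (hψ_nonneg : ∀ t, 0 ≤ ψ t)
    (hψ_int : (∫⁻ t in Set.Ioi (0:ℝ), ENNReal.ofReal (ψ t * Real.exp (-(Λ*t)))) < ⊤)
    (hψ_bound : ∀ (t : ℝ), 0 ≤ t → ∀ j : Fin N, ‖S j t ystar - ystar‖ ≤ ψ t)
    (Lw : ℝ) (hLw : 0 < Lw)
    (hw_lip : ∀ θ : Θ, ∀ u v : EuclideanSpace ℝ (Fin d), ‖w θ u - w θ v‖ ≤ Lw * ‖u - v‖) :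
    ∀ i : Fin N, ∃ M : ℝ, ∀ y : EuclideanSpace ℝ (Fin d),
      (∫ θ, (∫ t in Set.Ioi (0:ℝ),
        Real.exp (-(Λ*t)) * ‖w θ (S i t ystar) - ystar‖ * p θ (S i t y)) ∂ϑ) ≤ M := by
  -- Θ is nonempty (otherwise ∫ p = 0 ≠ 1)
  have hne : Nonempty Θ := by
    by_contra h
    rw [not_nonempty_iff] at h
    have := hp_int ystar
    simp [MeasureTheory.integral_of_isEmpty] at this
  intro i
  -- uniform bound C on ‖w θ ystar - ystar‖ by compactness
  have hcont : Continuous fun θ : Θ => ‖w θ ystar - ystar‖ :=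
    ((hw_cont.comp (continuous_id.prodMk continuous_const)).sub continuous_const).norm
  obtain ⟨θ0, -, hθ0⟩ := isCompact_univ.exists_isMaxOn Set.univ_nonempty hcont.continuousOn
  set C := ‖w θ0 ystar - ystar‖ with hCdef
  have hC0 : 0 ≤ C := norm_nonneg _
  have hCb : ∀ θ : Θ, ‖w θ ystar - ystar‖ ≤ C := fun θ => hθ0 (Set.mem_univ θ)
  -- the dominating function
  set g : ℝ → ℝ≥0∞ := fun t => ENNReal.ofReal ((Lw * ψ t + C) * Real.exp (-(Λ*t))) with hgdef
  -- finiteness of ∫⁻ g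
  have hexp_int : IntegrableOn (fun t : ℝ => Real.exp (-Λ * t)) (Set.Ioi 0) :=
    exp_neg_integrableOn_Ioi 0 hΛ
  have hexp_lint : (∫⁻ t in Set.Ioi (0:ℝ), ENNReal.ofReal (Real.exp (-(Λ*t)))) < ⊤ := by
    have h1 : (∫⁻ t in Set.Ioi (0:ℝ), ENNReal.ofReal (Real.exp (-(Λ*t))))
        = ENNReal.ofReal (∫ t in Set.Ioi (0:ℝ), Real.exp (-(Λ*t))) := by
      rw [← ofReal_integral_eq_lintegral_ofReal]
      · simpa [neg_mul, IntegrableOn] using hexp_int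
      · exact Filter.Eventually.of_forall fun t => (Real.exp_pos _).le
    rw [h1]; exact ENNReal.ofReal_lt_top
  have hg_fin : (∫⁻ t in Set.Ioi (0:ℝ), g t) < ⊤ := by
    have heq : ∀ t : ℝ, g t = ENNReal.ofReal Lw * ENNReal.ofReal (ψ t * Real.exp (-(Λ*t)))
        + ENNReal.ofReal C * ENNReal.ofReal (Real.exp (-(Λ*t))) := by
      intro t
      rw [← ENNReal.ofReal_mul hLw.le, ← ENNReal.ofReal_mul hC0,
        ← ENNReal.ofReal_add (mul_nonneg hLw.le (mul_nonneg (hψ_nonneg t) (Real.exp_pos _).le))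
          (mul_nonneg hC0 (Real.exp_pos _).le)]
      simp only [hgdef]
      ring_nf
    calc (∫⁻ t in Set.Ioi (0:ℝ), g t)
        = (∫⁻ t in Set.Ioi (0:ℝ), ENNReal.ofReal Lw * ENNReal.ofReal (ψ t * Real.exp (-(Λ*t)))
            + ENNReal.ofReal C * ENNReal.ofReal (Real.exp (-(Λ*t)))) := by
          simp only [heq]
      _ = ENNReal.ofReal Lw * (∫⁻ t in Set.Ioi (0:ℝ), ENNReal.ofReal (ψ t * Real.exp (-(Λ*t))))
            + ENNReal.ofReal C * (∫⁻ t in Set.Ioi (0:ℝ), ENNReal.ofReal (Real.exp (-(Λ*t)))) := by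
          rw [lintegral_add_left, lintegral_const_mul, lintegral_const_mul]
          · exact (Real.measurable_exp.comp (measurable_const.mul measurable_id).neg).ennreal_ofReal
          · exact ((hψ_meas.mul ((Real.measurable_exp.comp
              (measurable_const.mul measurable_id).neg))).ennreal_ofReal)
          · exact ((hψ_meas.mul ((Real.measurable_exp.comp
              (measurable_const.mul measurable_id).neg))).ennreal_ofReal).const_mul _
      _ < ⊤ := by
          apply ENNReal.add_lt_top.2
          exact ⟨ENNReal.mul_lt_top ENNReal.ofReal_lt_top hψ_int,
            ENNReal.mul_lt_top ENNReal.ofReal_lt_top hexp_lint⟩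
  refine ⟨(∫⁻ t in Set.Ioi (0:ℝ), g t).toReal, fun y => ?_⟩
  -- abbreviations
  set f : Θ → ℝ → ℝ := fun θ t =>
    Real.exp (-(Λ*t)) * ‖w θ (S i t ystar) - ystar‖ * p θ (S i t y) with hfdef
  have hf_nonneg : ∀ θ t, 0 ≤ f θ t := fun θ t => by
    have := hp_nonneg θ (S i t y); positivity
  -- measurability of the full integrand on the product space
  have hmS : ∀ z : EuclideanSpace ℝ (Fin d),
      Measurable (fun q : Θ × ℝ => S i q.2 z) := fun z =>
    (hS_meas i).comp (measurable_snd.prodMk measurable_const)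
  have hmn : Measurable (fun q : Θ × ℝ => ‖w q.1 (S i q.2 ystar) - ystar‖) :=
    ((hw_cont.measurable.comp (measurable_fst.prodMk (hmS ystar))).sub
      measurable_const).norm
  have hmp : Measurable (fun q : Θ × ℝ => p q.1 (S i q.2 y)) :=
    hp_meas.comp (measurable_fst.prodMk (hmS y))
  have hme : Measurable (fun q : Θ × ℝ => Real.exp (-(Λ * q.2))) :=
    Real.measurable_exp.comp (measurable_const.mul measurable_snd).neg
  have hmf : Measurable (fun q : Θ × ℝ => ENNReal.ofReal (f q.1 q.2)) :=
    ((hme.mul hmn).mul hmp).ennreal_ofReal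
  -- Step A: pointwise, ofReal of inner integral ≤ lintegral
  have stepA : ∀ θ : Θ, ENNReal.ofReal (∫ t in Set.Ioi (0:ℝ), f θ t)
      ≤ ∫⁻ t in Set.Ioi (0:ℝ), ENNReal.ofReal (f θ t) := by
    intro θ
    by_cases hI : IntegrableOn (f θ) (Set.Ioi 0)
    · rw [ofReal_integral_eq_lintegral_ofReal hI
        (Filter.Eventually.of_forall fun t => hf_nonneg θ t)]
    · rw [MeasureTheory.integral_undef hI]; simp
  -- Step B: bound the lintegral in θ for fixed t > 0
  have stepB : ∀ t : ℝ, t ∈ Set.Ioi (0:ℝ) →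
      (∫⁻ θ, ENNReal.ofReal (f θ t) ∂ϑ) ≤ g t := by
    intro t ht
    have hpt : Integrable (fun θ => p θ (S i t y)) ϑ := by
      by_contra h
      have := hp_int (S i t y)
      rw [MeasureTheory.integral_undef h] at this
      norm_num at this
    have hp1 : (∫⁻ θ, ENNReal.ofReal (p θ (S i t y)) ∂ϑ) = 1 := by
      rw [← ofReal_integral_eq_lintegral_ofReal hpt
        (Filter.Eventually.of_forall fun θ => hp_nonneg θ _), hp_int]
      simp
    have hbound : ∀ θ : Θ, ENNReal.ofReal (f θ t)
        ≤ ENNReal.ofReal ((Lw * ψ t + C) * Real.exp (-(Λ*t)))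
            * ENNReal.ofReal (p θ (S i t y)) := by
      intro θ
      rw [← ENNReal.ofReal_mul (mul_nonneg (add_nonneg (mul_nonneg hLw.le (hψ_nonneg t)) hC0)
        (Real.exp_pos _).le)]
      apply ENNReal.ofReal_le_ofReal
      have hnb : ‖w θ (S i t ystar) - ystar‖ ≤ Lw * ψ t + C := by
        calc ‖w θ (S i t ystar) - ystar‖
            ≤ ‖w θ (S i t ystar) - w θ ystar‖ + ‖w θ ystar - ystar‖ := by
              have := norm_sub_le_norm_sub_add_norm_sub (w θ (S i t ystar)) (w θ ystar) ystar
              simpa using this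
          _ ≤ Lw * ‖S i t ystar - ystar‖ + C := add_le_add (hw_lip θ _ _) (hCb θ)
          _ ≤ Lw * ψ t + C := by
              have := hψ_bound t (le_of_lt ht) i
              nlinarith [norm_nonneg (S i t ystar - ystar)]
      have hp0 := hp_nonneg θ (S i t y)
      have he0 : (0:ℝ) ≤ Real.exp (-(Λ*t)) := (Real.exp_pos _).le
      calc f θ t = (‖w θ (S i t ystar) - ystar‖ * Real.exp (-(Λ*t))) * p θ (S i t y) := by
            simp only [hfdef]; ring
        _ ≤ ((Lw * ψ t + C) * Real.exp (-(Λ*t))) * p θ (S i t y) := by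
            apply mul_le_mul_of_nonneg_right _ hp0
            exact mul_le_mul_of_nonneg_right hnb he0
    calc (∫⁻ θ, ENNReal.ofReal (f θ t) ∂ϑ)
        ≤ ∫⁻ θ, ENNReal.ofReal ((Lw * ψ t + C) * Real.exp (-(Λ*t)))
            * ENNReal.ofReal (p θ (S i t y)) ∂ϑ := lintegral_mono hbound
      _ = ENNReal.ofReal ((Lw * ψ t + C) * Real.exp (-(Λ*t)))
            * ∫⁻ θ, ENNReal.ofReal (p θ (S i t y)) ∂ϑ := by
          rw [lintegral_const_mul]
          exact (hp_meas.comp (measurable_id.prodMk measurable_const)).ennreal_ofReal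
      _ = g t := by rw [hp1, mul_one]
  -- Step C: chain everything in ℝ≥0∞
  have stepC : (∫⁻ θ, ENNReal.ofReal (∫ t in Set.Ioi (0:ℝ), f θ t) ∂ϑ)
      ≤ ∫⁻ t in Set.Ioi (0:ℝ), g t := by
    calc (∫⁻ θ, ENNReal.ofReal (∫ t in Set.Ioi (0:ℝ), f θ t) ∂ϑ)
        ≤ ∫⁻ θ, (∫⁻ t in Set.Ioi (0:ℝ), ENNReal.ofReal (f θ t)) ∂ϑ :=
          lintegral_mono stepA
      _ = ∫⁻ t in Set.Ioi (0:ℝ), ∫⁻ θ, ENNReal.ofReal (f θ t) ∂ϑ :=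
          lintegral_lintegral_swap hmf.aemeasurable
      _ ≤ ∫⁻ t in Set.Ioi (0:ℝ), g t := by
          refine lintegral_mono_ae ?_
          filter_upwards [ae_restrict_mem measurableSet_Ioi] with t ht
          exact stepB t ht
  -- conclude
  have hinner_nonneg : ∀ θ : Θ, 0 ≤ ∫ t in Set.Ioi (0:ℝ), f θ t := fun θ =>
    MeasureTheory.integral_nonneg (hf_nonneg θ)
  by_cases hI : Integrable (fun θ => ∫ t in Set.Ioi (0:ℝ), f θ t) ϑ
  · rw [show (∫ θ, (∫ t in Set.Ioi (0:ℝ),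
        Real.exp (-(Λ*t)) * ‖w θ (S i t ystar) - ystar‖ * p θ (S i t y)) ∂ϑ)
        = ∫ θ, (∫ t in Set.Ioi (0:ℝ), f θ t) ∂ϑ from rfl]
    rw [MeasureTheory.integral_eq_lintegral_of_nonneg_ae
      (Filter.Eventually.of_forall hinner_nonneg) hI.aestronglyMeasurable]
    exact ENNReal.toReal_mono hg_fin.ne stepC
  · rw [show (∫ θ, (∫ t in Set.Ioi (0:ℝ),
        Real.exp (-(Λ*t)) * ‖w θ (S i t ystar) - ystar‖ * p θ (S i t y)) ∂ϑ)
        = ∫ θ, (∫ t in Set.Ioi (0:ℝ), f θ t) ∂ϑ from rfl]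
    rw [MeasureTheory.integral_undef hI]
    exact ENNReal.toReal_nonneg
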